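/- Let p be a purely imaginary complex number (p̄ = −p). Then there exists a unique star structure ★ on the Jordanian quantum group SL_p^{(j)}(2,ℂ) with α^★ = α + pγ, β^★ = β − pα − p²γ + pδ, γ^★ = γ, δ^★ = δ − pγ, and it is a Hopf star structure: Δ(x^★) = (★ ⊗ ★)(Δ(x)) for all x, where Δ is the matrix comultiplication. (This real form is the Jordanian quantum group SL_p^{(j)}(2,ℝ).) -/

import Mathlib

noncomputable section

open FreeAlgebra
open scoped TensorProduct

/-- The defining relations of the Jordanian quantum group `SL_p^{(j)}(2,ℂ)`,
with generators `α = ι ℂ 0`, `β = ι ℂ 1`, `γ = ι ℂ 2`, `δ = ι ℂ 3`. -/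
inductive JRel (p : ℂ) : FreeAlgebra ℂ (Fin 4) → FreeAlgebra ℂ (Fin 4) → Prop
  | ab : JRel p (ι ℂ 0 * ι ℂ 1 - ι ℂ 1 * ι ℂ 0) (p • (ι ℂ 0 * ι ℂ 0) - p • 1)
  | ag : JRel p (ι ℂ 0 * ι ℂ 2 - ι ℂ 2 * ι ℂ 0) ((-p) • (ι ℂ 2 * ι ℂ 2))
  | bd : JRel p (ι ℂ 1 * ι ℂ 3 - ι ℂ 3 * ι ℂ 1) (p • 1 - p • (ι ℂ 3 * ι ℂ 3))
  | gd : JRel p (ι ℂ 2 * ι ℂ 3 - ι ℂ 3 * ι ℂ 2) (p • (ι ℂ 2 * ι ℂ 2))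
  | ad : JRel p (ι ℂ 0 * ι ℂ 3 - ι ℂ 3 * ι ℂ 0) (p • ((ι ℂ 0 - ι ℂ 3) * ι ℂ 2))
  | bg : JRel p (ι ℂ 1 * ι ℂ 2 - ι ℂ 2 * ι ℂ 1)
      ((-p) • (ι ℂ 0 * ι ℂ 2) - p • (ι ℂ 2 * ι ℂ 3))
  | det : JRel p (ι ℂ 0 * ι ℂ 3 - ι ℂ 1 * ι ℂ 2 - p • (ι ℂ 0 * ι ℂ 2)) 1

/-- The Jordanian quantum group `SL_p^{(j)}(2,ℂ)`. -/
abbrev SLj (p : ℂ) := RingQuot (JRel p)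

/-- The images of the generators `α, β, γ, δ` in `SL_p^{(j)}(2,ℂ)`. -/
def gen (p : ℂ) (i : Fin 4) : SLj p := RingQuot.mkAlgHom ℂ (JRel p) (ι ℂ i)

/-- A star structure on a complex algebra: additive, conjugate-linear,
antimultiplicative, unital, involutive. -/
def IsStar {A : Type*} [Ring A] [Algebra ℂ A] (st : A → A) : Prop :=
  (∀ x y : A, st (x + y) = st x + st y) ∧
  (∀ (z : ℂ) (x : A), st (z • x) = (starRingEnd ℂ) z • st x) ∧
  (∀ x y : A, st (x * y) = st y * st x) ∧
  st 1 = 1 ∧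
  (∀ x : A, st (st x) = x)

/-- `Δ` is the matrix comultiplication of `SL_p^{(j)}(2,ℂ)`. -/
def IsComul (p : ℂ) (Δ : SLj p →ₐ[ℂ] (SLj p ⊗[ℂ] SLj p)) : Prop :=
  Δ (gen p 0) = gen p 0 ⊗ₜ[ℂ] gen p 0 + gen p 1 ⊗ₜ[ℂ] gen p 2 ∧
  Δ (gen p 1) = gen p 0 ⊗ₜ[ℂ] gen p 1 + gen p 1 ⊗ₜ[ℂ] gen p 3 ∧
  Δ (gen p 2) = gen p 2 ⊗ₜ[ℂ] gen p 0 + gen p 3 ⊗ₜ[ℂ] gen p 2 ∧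
  Δ (gen p 3) = gen p 2 ⊗ₜ[ℂ] gen p 1 + gen p 3 ⊗ₜ[ℂ] gen p 3

/-- The prescribed values of the star structure on the generators:
`α^★ = α + pγ`, `β^★ = β − pα − p²γ + pδ`, `γ^★ = γ`, `δ^★ = δ − pγ`. -/
def StarVals (p : ℂ) (st : SLj p → SLj p) : Prop :=
  st (gen p 0) = gen p 0 + p • gen p 2 ∧
  st (gen p 1) = gen p 1 - p • gen p 0 - (p ^ 2) • gen p 2 + p • gen p 3 ∧
  st (gen p 2) = gen p 2 ∧
  st (gen p 3) = gen p 3 - p • gen p 2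

namespace JAux
open MulOpposite

def jvals (p : ℂ) : Fin 4 → SLj p
  | 0 => gen p 0 + p • gen p 2
  | 1 => gen p 1 - p • gen p 0 - (p ^ 2) • gen p 2 + p • gen p 3
  | 2 => gen p 2
  | 3 => gen p 3 - p • gen p 2

def Gop (p : ℂ) : FreeAlgebra ℂ (Fin 4) →+* (SLj p)ᵐᵒᵖ :=
  (MonoidAlgebra.liftNCRingHom ((algebraMap ℂ (SLj p)ᵐᵒᵖ).comp (starRingEnd ℂ))
      (FreeMonoid.lift fun i => op (jvals p i))
      (fun x y => Algebra.commute_algebraMap_left (R := ℂ) (A := (SLj p)ᵐᵒᵖ) ((starRingEnd ℂ) x) _)).comp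
    (FreeAlgebra.equivMonoidAlgebraFreeMonoid (R := ℂ) (X := Fin 4)).toAlgHom.toRingHom

lemma Gop_ι (p : ℂ) (i : Fin 4) : Gop p (ι ℂ i) = op (jvals p i) := by
  simp [Gop, FreeAlgebra.equivMonoidAlgebraFreeMonoid, MonoidAlgebra.liftNCRingHom,
    MonoidAlgebra.of_apply]

lemma Gop_algebraMap (p : ℂ) (z : ℂ) :
    Gop p (algebraMap ℂ _ z) = op (algebraMap ℂ (SLj p) ((starRingEnd ℂ) z)) := by
  simp [Gop, MonoidAlgebra.liftNCRingHom, MonoidAlgebra.coe_algebraMap]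

lemma Gop_smul (p : ℂ) (z : ℂ) (x : FreeAlgebra ℂ (Fin 4)) :
    Gop p (z • x) = (starRingEnd ℂ) z • Gop p x := by
  rw [Algebra.smul_def, map_mul, Gop_algebraMap, Algebra.smul_def]
  rfl

section rels
variable (p : ℂ)

local notation "a" => gen p 0
local notation "b" => gen p 1
local notation "c" => gen p 2
local notation "d" => gen p 3

lemma R1 : a * b - b * a = p • (a * a) - p • 1 := by
  simpa [gen, map_sub, map_mul, map_smul, map_one] using
    RingQuot.mkAlgHom_rel ℂ (JRel.ab (p := p))
lemma R2 : a * c - c * a = -(p • (c * c)) := by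
  simpa [gen, map_sub, map_mul, map_smul, neg_smul] using RingQuot.mkAlgHom_rel ℂ (JRel.ag (p := p))
lemma R3 : b * d - d * b = p • 1 - p • (d * d) := by
  simpa [gen, map_sub, map_mul, map_smul, map_one] using
    RingQuot.mkAlgHom_rel ℂ (JRel.bd (p := p))
lemma R4 : c * d - d * c = p • (c * c) := by
  simpa [gen, map_sub, map_mul, map_smul] using RingQuot.mkAlgHom_rel ℂ (JRel.gd (p := p))
lemma R5 : a * d - d * a = p • ((a - d) * c) := by
  simpa [gen, map_sub, map_mul, map_smul] using RingQuot.mkAlgHom_rel ℂ (JRel.ad (p := p))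
lemma R6 : b * c - c * b = -(p • (a * c)) - p • (c * d) := by
  simpa [gen, map_sub, map_mul, map_smul, neg_smul] using RingQuot.mkAlgHom_rel ℂ (JRel.bg (p := p))
lemma R7 : a * d - b * c - p • (a * c) = 1 := by
  simpa [gen, map_sub, map_mul, map_smul, map_one] using
    RingQuot.mkAlgHom_rel ℂ (JRel.det (p := p))

lemma hab : a * b = b * a + (p • (a * a) - p • 1) := by rw [← R1]; abel
lemma hac : a * c = c * a + -(p • (c * c)) := by rw [← R2]; abel
lemma hbd : b * d = d * b + (p • 1 - p • (d * d)) := by rw [← R3]; abel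
lemma hcd : c * d = d * c + p • (c * c) := by rw [← R4]; abel
lemma had : a * d = d * a + p • ((a - d) * c) := by rw [← R5]; abel
lemma hbc : b * c = c * b + (-(p • (a * c)) - p • (c * d)) := by rw [← R6]; abel

-- test one primed relation
example : jvals p 1 * jvals p 0 - jvals p 0 * jvals p 1
    = (-p) • (jvals p 0 * jvals p 0) - (-p) • 1 := by
  simp only [jvals]
  simp only [hab p, hac p, hbd p, hcd p, had p, hbc p, mul_add, add_mul, mul_sub, sub_mul,
    smul_mul_assoc, mul_smul_comm, smul_smul, smul_sub, smul_add, mul_one, one_mul,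
    smul_neg, neg_smul]
  module

end rels

lemma wd (p : ℂ) (hp : (starRingEnd ℂ) p = -p) :
    ∀ ⦃x y⦄, JRel p x y → Gop p x = Gop p y := by
  intro x y h
  cases h <;>
    refine MulOpposite.unop_injective ?_ <;>
    simp only [map_sub, map_mul, map_one, map_neg, Gop_smul, Gop_ι, hp, MulOpposite.unop_sub,
      MulOpposite.unop_mul, MulOpposite.unop_smul, MulOpposite.unop_one, MulOpposite.unop_neg,
      MulOpposite.unop_op, neg_smul, neg_neg]
  case det => 
    rw [← R7 p]
    simp only [jvals, hab p, hac p, hbd p, hcd p, had p, hbc p, mul_add, add_mul, mul_sub,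
      sub_mul, smul_mul_assoc, mul_smul_comm, smul_smul, smul_sub, smul_add, mul_one, one_mul,
      smul_neg, neg_smul]
    module
  all_goals
    simp only [jvals, hab p, hac p, hbd p, hcd p, had p, hbc p, mul_add, add_mul, mul_sub,
      sub_mul, smul_mul_assoc, mul_smul_comm, smul_smul, smul_sub, smul_add, mul_one, one_mul,
      smul_neg, neg_smul]
  all_goals module

variable (p : ℂ) (hp : (starRingEnd ℂ) p = -p)

def stj : SLj p → SLj p := fun x => (RingQuot.lift ⟨Gop p, wd p hp⟩ x).unop

lemma mk_eq (x : FreeAlgebra ℂ (Fin 4)) :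
    RingQuot.mkAlgHom ℂ (JRel p) x = RingQuot.mkRingHom (JRel p) x := by
  rw [← RingQuot.mkAlgHom_coe ℂ (JRel p)]; rfl

lemma stj_mk (x : FreeAlgebra ℂ (Fin 4)) :
    stj p hp (RingQuot.mkAlgHom ℂ (JRel p) x) = (Gop p x).unop := by
  rw [stj, mk_eq, RingQuot.lift_mkRingHom_apply]

lemma stj_gen (i : Fin 4) : stj p hp (gen p i) = jvals p i := by
  rw [gen, stj_mk, Gop_ι, MulOpposite.unop_op]

lemma stj_add (x y : SLj p) : stj p hp (x + y) = stj p hp x + stj p hp y := by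
  simp [stj, map_add]

lemma stj_mul (x y : SLj p) : stj p hp (x * y) = stj p hp y * stj p hp x := by
  simp [stj, map_mul]

lemma stj_one : stj p hp 1 = 1 := by simp [stj]

lemma stj_algebraMap (z : ℂ) :
    stj p hp (algebraMap ℂ (SLj p) z) = algebraMap ℂ (SLj p) ((starRingEnd ℂ) z) := by
  have : algebraMap ℂ (SLj p) z = RingQuot.mkAlgHom ℂ (JRel p) (algebraMap ℂ _ z) :=
    (AlgHom.commutes _ _).symm
  rw [this, stj_mk, Gop_algebraMap, MulOpposite.unop_op]

lemma stj_smul (z : ℂ) (x : SLj p) :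
    stj p hp (z • x) = (starRingEnd ℂ) z • stj p hp x := by
  rw [Algebra.smul_def, stj_mul, stj_algebraMap, ← Algebra.commutes, ← Algebra.smul_def]

lemma slj_induction {P : SLj p → Prop}
    (halg : ∀ z : ℂ, P (algebraMap ℂ (SLj p) z)) (hgen : ∀ i, P (gen p i))
    (hmul : ∀ x y, P x → P y → P (x * y)) (hadd : ∀ x y, P x → P y → P (x + y)) :
    ∀ x, P x := by
  intro x
  obtain ⟨y, rfl⟩ := RingQuot.mkAlgHom_surjective ℂ (JRel p) x
  induction y using FreeAlgebra.induction with
  | grade0 r => rw [AlgHom.commutes]; exact halg r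
  | grade1 i => exact hgen i
  | mul u v hu hv => rw [map_mul]; exact hmul _ _ hu hv
  | add u v hu hv => rw [map_add]; exact hadd _ _ hu hv

lemma stj_sub (x y : SLj p) : stj p hp (x - y) = stj p hp x - stj p hp y := by
  simp [stj, map_sub]

lemma stj_invol_gen : ∀ i, stj p hp (stj p hp (gen p i)) = gen p i := by
  have h := stj_gen p hp
  have e0 := h 0; have e1 := h 1; have e2 := h 2; have e3 := h 3
  simp only [jvals] at e0 e1 e2 e3
  intro i
  fin_cases i
  · show stj p hp (stj p hp (gen p 0)) = gen p 0
    rw [e0, stj_add, stj_smul, e0, e2, hp]; module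
  · show stj p hp (stj p hp (gen p 1)) = gen p 1
    rw [e1, stj_add, stj_sub, stj_sub, stj_smul, stj_smul, stj_smul, e0, e1, e2, e3, hp, map_pow,
      hp]
    module
  · show stj p hp (stj p hp (gen p 2)) = gen p 2
    rw [e2, e2]
  · show stj p hp (stj p hp (gen p 3)) = gen p 3
    rw [e3, stj_sub, stj_smul, e2, e3, hp]; module

lemma stj_invol : ∀ x, stj p hp (stj p hp x) = x := by
  refine slj_induction p ?_ (stj_invol_gen p hp) ?_ ?_
  · intro z
    rw [stj_algebraMap, stj_algebraMap, Complex.conj_conj]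
  · intro x y hx hy; rw [stj_mul, stj_mul, hx, hy]
  · intro x y hx hy; rw [stj_add, stj_add, hx, hy]

end JAux

/-- For purely imaginary `p` there is a unique star structure on the Jordanian quantum
group `SL_p^{(j)}(2,ℂ)` with the prescribed values, and it is a Hopf star structure.
(The real form `SL_p^{(j)}(2,ℝ)`.) -/
theorem jordanian_star_exists_unique (p : ℂ) (hp : (starRingEnd ℂ) p = -p) :
    (∃! st : SLj p → SLj p, IsStar st ∧ StarVals p st) ∧
    (∀ st : SLj p → SLj p, IsStar st ∧ StarVals p st →
      ∀ Δ : SLj p →ₐ[ℂ] (SLj p ⊗[ℂ] SLj p), IsComul p Δ →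
        ∃ T : (SLj p ⊗[ℂ] SLj p) → (SLj p ⊗[ℂ] SLj p),
          (∀ u v : SLj p ⊗[ℂ] SLj p, T (u + v) = T u + T v) ∧
          (∀ x y : SLj p, T (x ⊗ₜ[ℂ] y) = st x ⊗ₜ[ℂ] st y) ∧
          (∀ x : SLj p, Δ (st x) = T (Δ x))) := by
  open JAux in
  constructor
  · refine ⟨stj p hp, ⟨⟨stj_add p hp, stj_smul p hp, stj_mul p hp, stj_one p hp,
      stj_invol p hp⟩, ?_, ?_, ?_, ?_⟩, ?_⟩
    · rw [stj_gen]; rfl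
    · rw [stj_gen]; rfl
    · rw [stj_gen]; rfl
    · rw [stj_gen]; rfl
    · rintro st' ⟨⟨sadd, ssmul, smul', sone, -⟩, hv0, hv1, hv2, hv3⟩
      funext x
      refine slj_induction p (P := fun x => st' x = stj p hp x) ?_ ?_ ?_ ?_ x
      · intro z
        rw [stj_algebraMap, Algebra.algebraMap_eq_smul_one, ssmul, sone,
          Algebra.algebraMap_eq_smul_one]
      · intro i
        fin_cases i
        · show st' (gen p 0) = stj p hp (gen p 0)
          rw [hv0, stj_gen]; rfl
        · show st' (gen p 1) = stj p hp (gen p 1)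
          rw [hv1, stj_gen]; rfl
        · show st' (gen p 2) = stj p hp (gen p 2)
          rw [hv2, stj_gen]; rfl
        · show st' (gen p 3) = stj p hp (gen p 3)
          rw [hv3, stj_gen]; rfl
      · intro x y hx hy; rw [smul', stj_mul, hx, hy]
      · intro x y hx hy; rw [sadd, stj_add, hx, hy]
  · rintro st ⟨⟨sadd, ssmul, smul', sone, -⟩, hv0, hv1, hv2, hv3⟩ Δ ⟨d0, d1, d2, d3⟩
    have hbal : ∀ (z : ℂ) (x y : SLj p),
        st (z • x) ⊗ₜ[ℂ] st y = st x ⊗ₜ[ℂ] st (z • y) := by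
      intro z x y
      rw [ssmul, ssmul, TensorProduct.smul_tmul]
    letI : AddGroup (SLj p →+ SLj p ⊗[ℂ] SLj p) := @AddCommGroup.toAddGroup _ (AddMonoidHom.instAddCommGroup (M := SLj p) (N := SLj p ⊗[ℂ] SLj p))
    let T : (SLj p ⊗[ℂ] SLj p) →+ (SLj p ⊗[ℂ] SLj p) := TensorProduct.liftAddHom
      (AddMonoidHom.mk' (fun x => AddMonoidHom.mk' (fun y => st x ⊗ₜ[ℂ] st y)
          (fun y1 y2 => by rw [sadd, TensorProduct.tmul_add]))
        (fun x1 x2 => AddMonoidHom.ext fun y => by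
          simp only [AddMonoidHom.mk'_apply, AddMonoidHom.add_apply]
          rw [sadd, TensorProduct.add_tmul]))
      (fun z x y => hbal z x y)
    refine ⟨⇑T, fun u v => map_add T u v, fun x y => rfl, ?_⟩
    have Ttmul : ∀ x y : SLj p, T (x ⊗ₜ[ℂ] y) = st x ⊗ₜ[ℂ] st y := fun _ _ => rfl
    have Tmul : ∀ u v, T (u * v) = T v * T u := by
      intro u v
      induction u using TensorProduct.induction_on with
      | zero => simp
      | tmul x y =>
        induction v using TensorProduct.induction_on with
        | zero => simp
        | tmul x' y' =>
          rw [Algebra.TensorProduct.tmul_mul_tmul, Ttmul, Ttmul, Ttmul, smul', smul',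
            Algebra.TensorProduct.tmul_mul_tmul]
        | add u1 u2 h1 h2 => rw [mul_add, map_add, h1, h2, map_add, add_mul]
      | add u1 u2 h1 h2 => rw [add_mul, map_add, map_add, h1, h2, mul_add]
    have stAlg : ∀ z : ℂ, st (algebraMap ℂ (SLj p) z)
        = algebraMap ℂ (SLj p) ((starRingEnd ℂ) z) := by
      intro z
      rw [Algebra.algebraMap_eq_smul_one, ssmul, sone, Algebra.algebraMap_eq_smul_one]
    letI : AddCommGroup (SLj p ⊗[ℂ] SLj p) := TensorProduct.addCommGroup
    refine slj_induction p ?_ ?_ ?_ ?_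
    · intro z
      rw [stAlg, AlgHom.commutes, AlgHom.commutes, Algebra.TensorProduct.algebraMap_apply,
        Algebra.TensorProduct.algebraMap_apply, Ttmul, stAlg, sone]
    · intro i
      fin_cases i
      · show Δ (st (gen p 0)) = T (Δ (gen p 0))
        rw [hv0]
        simp only [map_add, map_sub, map_smul, d0, d1, d2, d3, Ttmul, hv0, hv1, hv2, hv3,
          TensorProduct.add_tmul, TensorProduct.tmul_add, TensorProduct.sub_tmul,
          TensorProduct.tmul_sub, TensorProduct.tmul_smul, ← TensorProduct.smul_tmul',
          smul_smul, smul_add, smul_sub]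
        module
      · show Δ (st (gen p 1)) = T (Δ (gen p 1))
        rw [hv1]
        simp only [map_add, map_sub, map_smul, d0, d1, d2, d3, Ttmul, hv0, hv1, hv2, hv3,
          TensorProduct.add_tmul, TensorProduct.tmul_add, TensorProduct.sub_tmul,
          TensorProduct.tmul_sub, TensorProduct.tmul_smul, ← TensorProduct.smul_tmul',
          smul_smul, smul_add, smul_sub]
        module
      · show Δ (st (gen p 2)) = T (Δ (gen p 2))
        rw [hv2]
        simp only [map_add, map_sub, map_smul, d0, d1, d2, d3, Ttmul, hv0, hv1, hv2, hv3,
          TensorProduct.add_tmul, TensorProduct.tmul_add, TensorProduct.sub_tmul,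
          TensorProduct.tmul_sub, TensorProduct.tmul_smul, ← TensorProduct.smul_tmul',
          smul_smul, smul_add, smul_sub]
        module
      · show Δ (st (gen p 3)) = T (Δ (gen p 3))
        rw [hv3]
        simp only [map_add, map_sub, map_smul, d0, d1, d2, d3, Ttmul, hv0, hv1, hv2, hv3,
          TensorProduct.add_tmul, TensorProduct.tmul_add, TensorProduct.sub_tmul,
          TensorProduct.tmul_sub, TensorProduct.tmul_smul, ← TensorProduct.smul_tmul',
          smul_smul, smul_add, smul_sub]
        module
    · intro x y hx hy
      rw [smul', map_mul, map_mul, Tmul, hx, hy]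
    · intro x y hx hy
      rw [sadd, map_add, map_add, map_add, hx, hy]
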